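/- Define v_0(x) = x(π^2 - x^2)/(1 + a^2 x^2) for x ∈ [-π, π] and a > 0. Then ‖v_0‖_{L^1(-π,π)} = (π^2/a^2 + 1/a^4) log(1 + π^2 a^2) - π^2/a^2, and ‖v_0‖_{L^2(-π,π)}^2 = (1/a^3)[(π^4 + 6π^2/a^2 + 5/a^4) arctan(πa) - π(15 + 13π^2 a^2)/(3a^3)]. Moreover, for any constant κ > 0, there exists a > 0 such that ‖v_0‖_{L^1} ≤ κ ‖v_0‖_{L^2}. -/

import Mathlib

open Real


lemma L1_eq (a : ℝ) (ha : 0 < a) :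
    ∫ x in (-π)..π, |x * (π ^ 2 - x ^ 2) / (1 + a ^ 2 * x ^ 2)|
        = (π ^ 2 / a ^ 2 + 1 / a ^ 4) * Real.log (1 + π ^ 2 * a ^ 2) - π ^ 2 / a ^ 2 := by
  have ha' : a ≠ 0 := ha.ne'
  have hd : ∀ x : ℝ, (0:ℝ) < 1 + a ^ 2 * x ^ 2 := fun x => by positivity
  have hcont : Continuous fun x : ℝ => x * (π ^ 2 - x ^ 2) / (1 + a ^ 2 * x ^ 2) :=
    Continuous.div (by continuity) (by continuity) (fun x => (hd x).ne')
  have hint : ∀ u v : ℝ, IntervalIntegrable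
      (fun x : ℝ => |x * (π ^ 2 - x ^ 2) / (1 + a ^ 2 * x ^ 2)|) MeasureTheory.volume u v :=
    fun u v => (hcont.abs).intervalIntegrable u v
  have hsplit : (∫ x in (-π)..π, |x * (π ^ 2 - x ^ 2) / (1 + a ^ 2 * x ^ 2)|)
      = (∫ x in (-π)..(0:ℝ), |x * (π ^ 2 - x ^ 2) / (1 + a ^ 2 * x ^ 2)|)
        + ∫ x in (0:ℝ)..π, |x * (π ^ 2 - x ^ 2) / (1 + a ^ 2 * x ^ 2)| :=
    (intervalIntegral.integral_add_adjacent_intervals (hint _ _) (hint _ _)).symm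
  have hneg : (∫ x in (-π)..(0:ℝ), |x * (π ^ 2 - x ^ 2) / (1 + a ^ 2 * x ^ 2)|)
      = ∫ x in (0:ℝ)..π, |x * (π ^ 2 - x ^ 2) / (1 + a ^ 2 * x ^ 2)| := by
    have := intervalIntegral.integral_comp_neg
      (fun x : ℝ => |x * (π ^ 2 - x ^ 2) / (1 + a ^ 2 * x ^ 2)|) (a := (0:ℝ)) (b := π)
    rw [neg_zero] at this
    rw [← this]
    apply intervalIntegral.integral_congr
    intro x _
    show |(-x) * (π ^ 2 - (-x) ^ 2) / (1 + a ^ 2 * (-x) ^ 2)| = _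
    rw [show (-x) * (π ^ 2 - (-x) ^ 2) / (1 + a ^ 2 * (-x) ^ 2)
        = -(x * (π ^ 2 - x ^ 2) / (1 + a ^ 2 * x ^ 2)) from by ring, abs_neg]
  have habs : (∫ x in (0:ℝ)..π, |x * (π ^ 2 - x ^ 2) / (1 + a ^ 2 * x ^ 2)|)
      = ∫ x in (0:ℝ)..π, x * (π ^ 2 - x ^ 2) / (1 + a ^ 2 * x ^ 2) := by
    apply intervalIntegral.integral_congr
    intro x hx
    rw [Set.uIcc_of_le pi_pos.le] at hx
    obtain ⟨hx0, hxπ⟩ := hx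
    have h1 : 0 ≤ π ^ 2 - x ^ 2 := by nlinarith
    exact abs_of_nonneg (div_nonneg (mul_nonneg hx0 h1) (hd x).le)
  set F : ℝ → ℝ := fun x => (π ^ 2 + 1 / a ^ 2) / (2 * a ^ 2) * Real.log (1 + a ^ 2 * x ^ 2)
      - x ^ 2 / (2 * a ^ 2) with hF
  have hFd : ∀ x ∈ Set.uIcc (0:ℝ) π, HasDerivAt F
      (x * (π ^ 2 - x ^ 2) / (1 + a ^ 2 * x ^ 2)) x := by
    intro x _
    have hin : HasDerivAt (fun x : ℝ => 1 + a ^ 2 * x ^ 2) (a ^ 2 * (2 * x)) x := by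
      simpa using ((hasDerivAt_pow 2 x).const_mul (a ^ 2)).const_add 1
    have hlog := (hin.log (hd x).ne').const_mul ((π ^ 2 + 1 / a ^ 2) / (2 * a ^ 2))
    have hsq : HasDerivAt (fun x : ℝ => x ^ 2 / (2 * a ^ 2)) (2 * x / (2 * a ^ 2)) x := by
      simpa using (hasDerivAt_pow 2 x).div_const (2 * a ^ 2)
    have := hlog.sub hsq
    refine HasDerivAt.congr_deriv this ?_
    field_simp
    ring
  have hval : (∫ x in (0:ℝ)..π, x * (π ^ 2 - x ^ 2) / (1 + a ^ 2 * x ^ 2)) = F π - F 0 :=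
    intervalIntegral.integral_eq_sub_of_hasDerivAt hFd (hcont.intervalIntegrable _ _)
  rw [hsplit, hneg, habs, hval, hF]
  simp only []
  rw [show (1:ℝ) + a ^ 2 * π ^ 2 = 1 + π ^ 2 * a ^ 2 by ring]
  rw [show (1:ℝ) + a ^ 2 * 0 ^ 2 = 1 by ring, Real.log_one]
  field_simp
  ring


lemma L2_eq (a : ℝ) (ha : 0 < a) :
    ∫ x in (-π)..π, (x * (π ^ 2 - x ^ 2) / (1 + a ^ 2 * x ^ 2)) ^ 2
        = (1 / a ^ 3) * ((π ^ 4 + 6 * π ^ 2 / a ^ 2 + 5 / a ^ 4) * Real.arctan (π * a)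
            - π * (15 + 13 * π ^ 2 * a ^ 2) / (3 * a ^ 3)) := by
  have ha' : a ≠ 0 := ha.ne'
  have hd : ∀ x : ℝ, (0:ℝ) < 1 + a ^ 2 * x ^ 2 := fun x => by positivity
  have hcont : Continuous fun x : ℝ => (x * (π ^ 2 - x ^ 2) / (1 + a ^ 2 * x ^ 2)) ^ 2 :=
    (Continuous.div (by continuity) (by continuity) (fun x => (hd x).ne')).pow 2
  set G : ℝ → ℝ := fun x => x ^ 3 / (3 * a ^ 4) - (2 * π ^ 2 * a ^ 2 + 2) * x / a ^ 6
      + (π ^ 4 * a ^ 4 + 4 * π ^ 2 * a ^ 2 + 3) / a ^ 7 * Real.arctan (a * x)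
      - (π ^ 2 * a ^ 2 + 1) ^ 2 / (2 * a ^ 6)
          * (x / (1 + a ^ 2 * x ^ 2) + Real.arctan (a * x) / a) with hG
  have hGd : ∀ x ∈ Set.uIcc (-π) π, HasDerivAt G
      ((x * (π ^ 2 - x ^ 2) / (1 + a ^ 2 * x ^ 2)) ^ 2) x := by
    intro x _
    have hax : HasDerivAt (fun x : ℝ => a * x) a x := by
      simpa using (hasDerivAt_id x).const_mul a
    have harctan : HasDerivAt (fun x : ℝ => Real.arctan (a * x))
        (1 / (1 + (a * x) ^ 2) * a) x :=
      (Real.hasDerivAt_arctan (a * x)).comp x hax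
    have h1 : HasDerivAt (fun x : ℝ => x ^ 3 / (3 * a ^ 4)) (3 * x ^ 2 / (3 * a ^ 4)) x := by
      simpa using (hasDerivAt_pow 3 x).div_const (3 * a ^ 4)
    have h2 : HasDerivAt (fun x : ℝ => (2 * π ^ 2 * a ^ 2 + 2) * x / a ^ 6)
        ((2 * π ^ 2 * a ^ 2 + 2) / a ^ 6) x := by
      simpa using ((hasDerivAt_id x).const_mul (2 * π ^ 2 * a ^ 2 + 2)).div_const (a ^ 6)
    have h3 := harctan.const_mul ((π ^ 4 * a ^ 4 + 4 * π ^ 2 * a ^ 2 + 3) / a ^ 7)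
    have hden : HasDerivAt (fun x : ℝ => 1 + a ^ 2 * x ^ 2) (a ^ 2 * (2 * x)) x := by
      simpa using ((hasDerivAt_pow 2 x).const_mul (a ^ 2)).const_add 1
    have h4 : HasDerivAt (fun x : ℝ => x / (1 + a ^ 2 * x ^ 2))
        ((1 * (1 + a ^ 2 * x ^ 2) - x * (a ^ 2 * (2 * x))) / (1 + a ^ 2 * x ^ 2) ^ 2) x :=
      (hasDerivAt_id x).div hden (hd x).ne'
    have h5 := ((h4.add (harctan.div_const a)).const_mul
      ((π ^ 2 * a ^ 2 + 1) ^ 2 / (2 * a ^ 6)))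
    have := ((h1.sub h2).add h3).sub h5
    refine HasDerivAt.congr_deriv this ?_
    have hne := (hd x).ne'
    have hne2 : (1:ℝ) + (a * x) ^ 2 ≠ 0 := by positivity
    field_simp
    ring
  have hval := intervalIntegral.integral_eq_sub_of_hasDerivAt hGd (hcont.intervalIntegrable _ _)
  rw [hval, hG]
  simp only []
  rw [show a * -π = -(a * π) by ring, Real.arctan_neg,
    show π * a = a * π from mul_comm _ _]
  have hne : (1:ℝ) + a ^ 2 * π ^ 2 ≠ 0 := (hd π).ne'
  have hne' : (1:ℝ) + a ^ 2 * (-π) ^ 2 ≠ 0 := (hd (-π)).ne'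
  field_simp
  ring


lemma part3 (κ : ℝ) (hκ : 0 < κ) :
    ∃ b : ℝ, 0 < b ∧
      ((π ^ 2 / b ^ 2 + 1 / b ^ 4) * Real.log (1 + π ^ 2 * b ^ 2) - π ^ 2 / b ^ 2)
        ≤ κ * Real.sqrt ((1 / b ^ 3) * ((π ^ 4 + 6 * π ^ 2 / b ^ 2 + 5 / b ^ 4)
          * Real.arctan (π * b) - π * (15 + 13 * π ^ 2 * b ^ 2) / (3 * b ^ 3))) := by
  have hπ1 : (3.14:ℝ) ≤ π := Real.pi_gt_d2.le
  have hπ2 : π ≤ (3.15:ℝ) := Real.pi_lt_d2.le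
  have hπ0 : (0:ℝ) < π := Real.pi_pos
  have hπsq : π ^ 2 ≤ 10 := by nlinarith
  have hπ2lo : (9.8:ℝ) ≤ π ^ 2 := by nlinarith
  have hπ4 : (96:ℝ) ≤ π ^ 4 := by nlinarith
  have hπ5 : (301:ℝ) ≤ π ^ 5 := by nlinarith
  have hπ3hi : π ^ 3 ≤ 32 := by nlinarith
  obtain ⟨c, hc⟩ : ∃ c : ℝ, c = max 2 (22 / κ) := ⟨_, rfl⟩
  have hc2 : (2:ℝ) ≤ c := hc ▸ le_max_left _ _
  have hc0 : (0:ℝ) < c := by linarith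
  have hc1 : (1:ℝ) ≤ c := by linarith
  have hcκ : (22:ℝ) ≤ κ * c := by
    have h := le_max_right 2 (22 / κ)
    rw [← hc, div_le_iff₀ hκ] at h
    linarith
  refine ⟨c ^ 4, by positivity, ?_⟩
  obtain ⟨b, hbdef⟩ : ∃ b : ℝ, b = c ^ 4 := ⟨_, rfl⟩
  rw [← hbdef]
  have hb0 : (0:ℝ) < b := by rw [hbdef]; positivity
  have hb16 : (16:ℝ) ≤ b := by
    rw [hbdef]; nlinarith [sq_nonneg c, sq_nonneg (c - 2)]
  have hb2 : b ^ 2 = c ^ 8 := by rw [hbdef]; ring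
  have hb3 : b ^ 3 = c ^ 12 := by rw [hbdef]; ring
  have hc8 : (1:ℝ) ≤ c ^ 8 := by
    calc (1:ℝ) = 1 ^ 8 := by norm_num
      _ ≤ c ^ 8 := pow_le_pow_left₀ (by norm_num) hc1 8
  -- L1 upper bound
  have hlogub : Real.log (1 + π ^ 2 * b ^ 2) ≤ 16 * c := by
    have harg : (1:ℝ) + π ^ 2 * b ^ 2 ≤ (2 * c) ^ 8 := by
      rw [hb2]
      have : (2 * c) ^ 8 = 256 * c ^ 8 := by ring
      rw [this]
      nlinarith [hπsq, hc8, pow_nonneg hc0.le 8]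
    calc Real.log (1 + π ^ 2 * b ^ 2) ≤ Real.log ((2 * c) ^ 8) :=
          Real.log_le_log (by positivity) harg
      _ = 8 * Real.log (2 * c) := by rw [Real.log_pow]; push_cast; ring
      _ ≤ 8 * (2 * c - 1) := by
          have := Real.log_le_sub_one_of_pos (show (0:ℝ) < 2 * c by linarith)
          linarith
      _ ≤ 16 * c := by linarith
  have hlog0 : 0 ≤ Real.log (1 + π ^ 2 * b ^ 2) :=
    Real.log_nonneg (by nlinarith [sq_nonneg (π * b)])
  have hcoef : π ^ 2 / b ^ 2 + 1 / b ^ 4 ≤ 11 / c ^ 8 := by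
    have h1 : π ^ 2 / b ^ 2 ≤ 10 / c ^ 8 := by
      rw [hb2]; gcongr
    have h2 : 1 / b ^ 4 ≤ 1 / c ^ 8 := by
      rw [hbdef]
      apply one_div_le_one_div_of_le (by positivity)
      calc c ^ 8 ≤ c ^ 8 * c ^ 8 := le_mul_of_one_le_right (by positivity) hc8
        _ = (c ^ 4) ^ 4 := by ring
    calc π ^ 2 / b ^ 2 + 1 / b ^ 4 ≤ 10 / c ^ 8 + 1 / c ^ 8 := by linarith
      _ = 11 / c ^ 8 := by ring
  have hL1 : (π ^ 2 / b ^ 2 + 1 / b ^ 4) * Real.log (1 + π ^ 2 * b ^ 2) - π ^ 2 / b ^ 2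
      ≤ 176 / c ^ 7 := by
    have hmul : (π ^ 2 / b ^ 2 + 1 / b ^ 4) * Real.log (1 + π ^ 2 * b ^ 2)
        ≤ (11 / c ^ 8) * (16 * c) :=
      mul_le_mul hcoef hlogub hlog0 (by positivity)
    have heq : (11 / c ^ 8) * (16 * c) = 176 / c ^ 7 := by
      field_simp; ring
    have hpos : 0 ≤ π ^ 2 / b ^ 2 := by positivity
    linarith
  -- L2 lower bound
  obtain ⟨A, hA⟩ : ∃ A : ℝ, A = Real.arctan (π * b) := ⟨_, rfl⟩
  rw [← hA]
  have hA4 : π / 4 ≤ A := by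
    rw [hA, ← Real.arctan_one]
    exact Real.arctan_strictMono.monotone (by nlinarith)
  have hA0 : 0 ≤ A := le_trans (by positivity) hA4
  have hSA : π ^ 5 / 4 ≤ (π ^ 4 + 6 * π ^ 2 / b ^ 2 + 5 / b ^ 4) * A := by
    have hS : π ^ 4 ≤ π ^ 4 + 6 * π ^ 2 / b ^ 2 + 5 / b ^ 4 := by
      have : (0:ℝ) ≤ 6 * π ^ 2 / b ^ 2 + 5 / b ^ 4 := by positivity
      linarith
    have : π ^ 4 * (π / 4) ≤ (π ^ 4 + 6 * π ^ 2 / b ^ 2 + 5 / b ^ 4) * A :=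
      mul_le_mul hS hA4 (by positivity) (by positivity)
    calc π ^ 5 / 4 = π ^ 4 * (π / 4) := by ring
      _ ≤ _ := this
  have hT : π * (15 + 13 * π ^ 2 * b ^ 2) / (3 * b ^ 3) ≤ 9 := by
    rw [div_le_iff₀ (by positivity)]
    have hbb : 16 * b ^ 2 ≤ b ^ 3 := by
      calc 16 * b ^ 2 ≤ b * b ^ 2 := mul_le_mul_of_nonneg_right hb16 (sq_nonneg b)
        _ = b ^ 3 := by ring
    have hbsq : (256:ℝ) ≤ b ^ 2 := by
      calc (256:ℝ) = 16 * 16 := by norm_num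
        _ ≤ b * b := mul_le_mul hb16 hb16 (by norm_num) (by linarith)
        _ = b ^ 2 := by ring
    have hpb : π ^ 3 * b ^ 2 ≤ 32 * b ^ 2 :=
      mul_le_mul_of_nonneg_right hπ3hi (sq_nonneg b)
    calc π * (15 + 13 * π ^ 2 * b ^ 2) = 15 * π + 13 * (π ^ 3 * b ^ 2) := by ring
      _ ≤ 15 * 3.15 + 13 * (32 * b ^ 2) := by linarith [hπ2, hpb]
      _ ≤ 16 * b ^ 2 + 416 * b ^ 2 := by linarith [hbsq]
      _ = 27 * (16 * b ^ 2) := by ring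
      _ ≤ 27 * b ^ 3 := by linarith [hbb]
      _ = 9 * (3 * b ^ 3) := by ring
  have hbr : (64:ℝ) ≤ (π ^ 4 + 6 * π ^ 2 / b ^ 2 + 5 / b ^ 4) * A
      - π * (15 + 13 * π ^ 2 * b ^ 2) / (3 * b ^ 3) := by
    linarith [hSA, hT, hπ5]
  have hL2 : 64 / c ^ 12 ≤ (1 / b ^ 3) * ((π ^ 4 + 6 * π ^ 2 / b ^ 2 + 5 / b ^ 4) * A
      - π * (15 + 13 * π ^ 2 * b ^ 2) / (3 * b ^ 3)) := by
    rw [← hb3]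
    have h := mul_le_mul_of_nonneg_left hbr (by positivity : (0:ℝ) ≤ 1 / b ^ 3)
    have heq : (1 / b ^ 3) * 64 = 64 / b ^ 3 := by ring
    linarith
  have hsqrt : 8 / c ^ 6 ≤ Real.sqrt ((1 / b ^ 3) * ((π ^ 4 + 6 * π ^ 2 / b ^ 2 + 5 / b ^ 4) * A
      - π * (15 + 13 * π ^ 2 * b ^ 2) / (3 * b ^ 3))) := by
    rw [Real.le_sqrt' (by positivity)]
    calc (8 / c ^ 6) ^ 2 = 64 / c ^ 12 := by field_simp; ring
      _ ≤ _ := hL2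
  have hfinal : 176 / c ^ 7 ≤ κ * (8 / c ^ 6) := by
    rw [div_le_iff₀ (by positivity : (0:ℝ) < c ^ 7)]
    have : κ * (8 / c ^ 6) * c ^ 7 = 8 * (κ * c) := by field_simp
    rw [this]
    linarith
  calc (π ^ 2 / b ^ 2 + 1 / b ^ 4) * Real.log (1 + π ^ 2 * b ^ 2) - π ^ 2 / b ^ 2
      ≤ 176 / c ^ 7 := hL1
    _ ≤ κ * (8 / c ^ 6) := hfinal
    _ ≤ _ := mul_le_mul_of_nonneg_left hsqrt hκ.le

theorem example_initial_data (a : ℝ) (ha : 0 < a) :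
    (∫ x in (-π)..π, |x * (π ^ 2 - x ^ 2) / (1 + a ^ 2 * x ^ 2)|
        = (π ^ 2 / a ^ 2 + 1 / a ^ 4) * Real.log (1 + π ^ 2 * a ^ 2) - π ^ 2 / a ^ 2) ∧
    (∫ x in (-π)..π, (x * (π ^ 2 - x ^ 2) / (1 + a ^ 2 * x ^ 2)) ^ 2
        = (1 / a ^ 3) * ((π ^ 4 + 6 * π ^ 2 / a ^ 2 + 5 / a ^ 4) * Real.arctan (π * a)
            - π * (15 + 13 * π ^ 2 * a ^ 2) / (3 * a ^ 3))) ∧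
    (∀ κ : ℝ, 0 < κ → ∃ b : ℝ, 0 < b ∧
      (∫ x in (-π)..π, |x * (π ^ 2 - x ^ 2) / (1 + b ^ 2 * x ^ 2)|)
        ≤ κ * Real.sqrt (∫ x in (-π)..π, (x * (π ^ 2 - x ^ 2) / (1 + b ^ 2 * x ^ 2)) ^ 2)) := by
  refine ⟨L1_eq a ha, L2_eq a ha, fun κ hκ => ?_⟩
  obtain ⟨b, hb0, hle⟩ := part3 κ hκ
  exact ⟨b, hb0, by rw [L1_eq b hb0, L2_eq b hb0]; exact hle⟩
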